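/- Let Γ be the free (discrete) group on x_1, …, x_d with d ≥ 2, let F be its pro-p completion, and let Λ = ⊕_{n≥1} Λ_n with Λ_n = P_n(F)/P_{n+1}(F) ≅ P_n(Γ)/P_{n+1}(Γ) be the graded F_p-Lie algebra associated to the lower p-series, with bracket induced by group commutators and operators induced by p-th powers. For any subgroup Δ ≤ Γ, the graded object gr(Δ) = ⊕_{n≥1} (Δ ∩ P_n(Γ))P_{n+1}(Γ)/P_{n+1}(Γ) is a graded Lie subalgebra of Λ closed under the p-power operators, and the topological closure Δ̄ of Δ in F satisfies hdim_F^L(Δ̄) = dens_Λ(gr(Δ)) = liminf_{n→∞} (Σ_{m=1}^{n−1} dim_{F_p} gr(Δ)_m) / (Σ_{m=1}^{n−1} dim_{F_p} Λ_m). -/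

import Mathlib

open Filter Topology
open scoped commutatorElement

/-- A profinite group that is pro-`p`: compact, Hausdorff, totally disconnected, and every
open normal subgroup has index a power of `p`. -/
def IsProPGroup (p : ℕ) (G : Type*) [Group G] [TopologicalSpace G] : Prop :=
  CompactSpace G ∧ T2Space G ∧ TotallyDisconnectedSpace G ∧
    ∀ N : Subgroup G, N.Normal → IsOpen (N : Set G) → ∃ k : ℕ, N.index = p ^ k

/-- A filtration series of a profinite group: a descending chain of open normal subgroups
starting at the whole group and with trivial intersection. -/
def IsFiltrationSeries {G : Type*} [Group G] [TopologicalSpace G] (S : ℕ → Subgroup G) : Prop :=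
  S 0 = ⊤ ∧ (∀ i, (S i).Normal) ∧ (∀ i, IsOpen ((S i : Subgroup G) : Set G)) ∧
    (∀ i, S (i + 1) ≤ S i) ∧ (⨅ i, S i) = ⊥

/-- The Hausdorff dimension of a subgroup `H` with respect to a filtration series `S`:
`liminf_i log |H S_i : S_i| / log |G : S_i|`; note `|H S_i : S_i| = [H : H ∩ S_i]
= Subgroup.relIndex (S i) H` as each `S i` is normal. -/
noncomputable def hDim {G : Type*} [Group G] [TopologicalSpace G]
    (S : ℕ → Subgroup G) (H : Subgroup G) : ℝ :=
  Filter.liminf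
    (fun i => Real.log (Subgroup.relIndex (S i) H : ℝ) / Real.log ((S i).index : ℝ))
    Filter.atTop

/-- `H` has strong Hausdorff dimension `r` w.r.t. `S` if the defining lower limit is a
proper limit. -/
def HasStrongHDim {G : Type*} [Group G] [TopologicalSpace G]
    (S : ℕ → Subgroup G) (H : Subgroup G) (r : ℝ) : Prop :=
  Filter.Tendsto
    (fun i => Real.log (Subgroup.relIndex (S i) H : ℝ) / Real.log ((S i).index : ℝ))
    Filter.atTop (nhds r)

/-- The Hausdorff spectrum of `G` with respect to the filtration series `S`. -/
noncomputable def hSpec {G : Type*} [Group G] [TopologicalSpace G]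
    (S : ℕ → Subgroup G) : Set ℝ :=
  { r | ∃ H : Subgroup G, IsClosed (H : Set G) ∧ hDim S H = r }

/-- The lower `p`-series of a topological group, indexed so that
`lowerPSeries p G 0 = P_1(G) = G` and
`lowerPSeries p G i = P_{i+1}(G) = closure (P_i(G)^p [P_i(G), G])`. -/
def lowerPSeries (p : ℕ) (G : Type*) [Group G] [TopologicalSpace G] [IsTopologicalGroup G] :
    ℕ → Subgroup G
  | 0 => ⊤
  | i + 1 =>
      (Subgroup.closure ((fun x => x ^ p) '' ((lowerPSeries p G i : Subgroup G) : Set G)) ⊔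
        ⁅lowerPSeries p G i, (⊤ : Subgroup G)⁆).topologicalClosure

/-- `F` is a free pro-`p` group on the generators `ι i`, `i : Fin d`: it is a pro-`p` group,
topologically generated by the `ι i`, and every map from the generators to a finite `p`-group
extends uniquely to a continuous (i.e. open-kernel) homomorphism. -/
def IsFreeProPGroupOn (p : ℕ) {F : Type*} [Group F] [TopologicalSpace F] [IsTopologicalGroup F]
    {d : ℕ} (ι : Fin d → F) : Prop :=
  IsProPGroup p F ∧ (Subgroup.closure (Set.range ι)).topologicalClosure = ⊤ ∧
    ∀ (K : Type) (_ : Group K) (_ : Finite K), IsPGroup p K → ∀ f : Fin d → K,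
      ∃! φ : F →* K, IsOpen ((MonoidHom.ker φ : Subgroup F) : Set F) ∧ ∀ i, φ (ι i) = f i

/-- `F` is a free pro-`p` group of rank `d`. -/
def IsFreeProPGroup (p d : ℕ) (F : Type*) [Group F] [TopologicalSpace F]
    [IsTopologicalGroup F] : Prop :=
  ∃ ι : Fin d → F, IsFreeProPGroupOn p ι


section LPS
variable {p : ℕ} {F : Type*} [Group F] [TopologicalSpace F] [IsTopologicalGroup F]

lemma lps_isClosed (n : ℕ) : IsClosed ((lowerPSeries p F n : Subgroup F) : Set F) := by
  cases n with
  | zero => simp only [lowerPSeries, Subgroup.coe_top]; exact isClosed_univ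
  | succ n => exact Subgroup.isClosed_topologicalClosure _

lemma closure_normal_of_conj {S : Set F} (h : ∀ g : F, ∀ s ∈ S, g * s * g⁻¹ ∈ S) :
    (Subgroup.closure S).Normal := by
  constructor
  intro x hx g
  have hmap : (Subgroup.closure S).map (MulAut.conj g).toMonoidHom ≤ Subgroup.closure S := by
    rw [MonoidHom.map_closure]
    apply Subgroup.closure_mono
    rintro _ ⟨y, hy, rfl⟩
    exact h g y hy
  exact hmap ⟨x, hx, rfl⟩

instance lps_normal (n : ℕ) : (lowerPSeries p F n).Normal := by
  induction n with
  | zero =>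
    show (⊤ : Subgroup F).Normal
    infer_instance
  | succ n ih =>
    show ((Subgroup.closure ((fun x => x ^ p) '' ((lowerPSeries p F n : Subgroup F) : Set F)) ⊔
        ⁅lowerPSeries p F n, (⊤ : Subgroup F)⁆).topologicalClosure).Normal
    have h1 : (Subgroup.closure ((fun x => x ^ p) ''
        ((lowerPSeries p F n : Subgroup F) : Set F))).Normal := by
      apply closure_normal_of_conj
      rintro g _ ⟨y, hy, rfl⟩
      exact ⟨g * y * g⁻¹, ih.conj_mem y hy g, conj_pow ..⟩
    have h2 : (⁅lowerPSeries p F n, (⊤ : Subgroup F)⁆).Normal := Subgroup.commutator_normal _ _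
    have h3 : (Subgroup.closure ((fun x => x ^ p) '' ((lowerPSeries p F n : Subgroup F) : Set F)) ⊔
        ⁅lowerPSeries p F n, (⊤ : Subgroup F)⁆).Normal := Subgroup.sup_normal _ _
    exact Subgroup.is_normal_topologicalClosure _

lemma lps_pow_mem {n : ℕ} {x : F} (hx : x ∈ lowerPSeries p F n) :
    x ^ p ∈ lowerPSeries p F (n + 1) := by
  apply Subgroup.le_topologicalClosure _
  apply Subgroup.mem_sup_left
  exact Subgroup.subset_closure ⟨x, hx, rfl⟩

lemma lps_comm_top (m : ℕ) : ⁅lowerPSeries p F m, (⊤ : Subgroup F)⁆ ≤ lowerPSeries p F (m + 1) :=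
  le_trans le_sup_right (Subgroup.le_topologicalClosure _)

lemma lps_succ_le (n : ℕ) : lowerPSeries p F (n + 1) ≤ lowerPSeries p F n := by
  apply Subgroup.topologicalClosure_minimal _ _ (lps_isClosed n)
  apply sup_le
  · rw [Subgroup.closure_le]
    rintro _ ⟨y, hy, rfl⟩
    exact Subgroup.pow_mem _ hy p
  · exact Subgroup.commutator_le_left _ _

lemma lps_le {m n : ℕ} (h : n ≤ m) : lowerPSeries p F m ≤ lowerPSeries p F n :=
  antitone_nat_of_succ_le lps_succ_le h

end LPS

section LPS2
variable {p : ℕ} {F : Type*} [Group F] [TopologicalSpace F] [IsTopologicalGroup F]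

lemma commutatorElement_mul_right' {G : Type*} [Group G] (a b c : G) :
    ⁅a, b * c⁆ = ⁅a, b⁆ * (b * ⁅a, c⁆ * b⁻¹) := by
  simp only [commutatorElement_def]
  group

lemma commutatorElement_pow_right_of_commute {G : Type*} [Group G] {a b : G}
    (h : Commute ⁅a, b⁆ b) (k : ℕ) : ⁅a, b ^ k⁆ = ⁅a, b⁆ ^ k := by
  induction k with
  | zero => simp
  | succ k ih =>
    rw [pow_succ', commutatorElement_mul_right', ih]
    have : b * ⁅a, b⁆ ^ k * b⁻¹ = ⁅a, b⁆ ^ k := by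
      rw [(h.symm.pow_right k).eq, mul_assoc, mul_inv_cancel, mul_one]
    rw [this, ← pow_succ']

lemma lps_zero : lowerPSeries p F 0 = ⊤ := rfl

lemma lps_comm (n m : ℕ) :
    ⁅lowerPSeries p F m, lowerPSeries p F n⁆ ≤ lowerPSeries p F (m + n + 1) := by
  induction n generalizing m with
  | zero =>
    rw [lps_zero]
    exact lps_comm_top m
  | succ n ih =>
    set N := lowerPSeries p F (m + (n + 1) + 1) with hN
    have hNnormal : N.Normal := lps_normal _
    -- three subgroups lemma step
    have hcomm3 : ⁅lowerPSeries p F m, ⁅lowerPSeries p F n, (⊤ : Subgroup F)⁆⁆ ≤ N := by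
      rw [Subgroup.commutator_comm]
      rw [← QuotientGroup.ker_mk' N, ← Subgroup.map_eq_bot_iff,
        Subgroup.map_commutator, Subgroup.map_commutator]
      apply Subgroup.commutator_commutator_eq_bot_of_rotate
      · rw [← Subgroup.map_commutator, ← Subgroup.map_commutator, Subgroup.map_eq_bot_iff,
          QuotientGroup.ker_mk']
        calc ⁅⁅(⊤ : Subgroup F), lowerPSeries p F m⁆, lowerPSeries p F n⁆
            ≤ ⁅lowerPSeries p F (m + 1), lowerPSeries p F n⁆ := by
              apply Subgroup.commutator_mono _ le_rfl
              rw [Subgroup.commutator_comm]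
              exact lps_comm_top m
          _ ≤ lowerPSeries p F (m + 1 + n + 1) := ih (m + 1)
          _ ≤ N := lps_le (by omega)
      · rw [← Subgroup.map_commutator, ← Subgroup.map_commutator, Subgroup.map_eq_bot_iff,
          QuotientGroup.ker_mk']
        calc ⁅⁅lowerPSeries p F m, lowerPSeries p F n⁆, (⊤ : Subgroup F)⁆
            ≤ ⁅lowerPSeries p F (m + n + 1), (⊤ : Subgroup F)⁆ :=
              Subgroup.commutator_mono (ih m) le_rfl
          _ ≤ lowerPSeries p F (m + n + 1 + 1) := lps_comm_top _
          _ ≤ N := lps_le (by omega)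
    rw [Subgroup.commutator_le]
    intro a ha b hb
    let C : Subgroup F :=
      { carrier := {b | ⁅a, b⁆ ∈ N}
        one_mem' := by simpa using one_mem N
        mul_mem' := by
          intro x y hx hy
          show ⁅a, x * y⁆ ∈ N
          rw [commutatorElement_mul_right']
          exact mul_mem hx (hNnormal.conj_mem _ hy x)
        inv_mem' := by
          intro x hx
          show ⁅a, x⁻¹⁆ ∈ N
          have hrw : ⁅a, x⁻¹⁆ = x⁻¹ * ⁅a, x⁆⁻¹ * (x⁻¹)⁻¹ := by
            simp only [commutatorElement_def]
            group
          rw [hrw]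
          exact hNnormal.conj_mem _ (inv_mem hx) x⁻¹ }
    have closedC : IsClosed (C : Set F) := by
      have : (C : Set F) = (fun b => a * b * a⁻¹ * b⁻¹) ⁻¹' (N : Set F) := rfl
      rw [this]
      apply IsClosed.preimage _ (lps_isClosed _)
      fun_prop
    suffices hle : lowerPSeries p F (n + 1) ≤ C from hle hb
    show (Subgroup.closure ((fun x => x ^ p) '' ((lowerPSeries p F n : Subgroup F) : Set F)) ⊔
        ⁅lowerPSeries p F n, (⊤ : Subgroup F)⁆).topologicalClosure ≤ C
    apply Subgroup.topologicalClosure_minimal _ _ closedC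
    apply sup_le
    · rw [Subgroup.closure_le]
      rintro _ ⟨x, hx, rfl⟩
      show ⁅a, x ^ p⁆ ∈ N
      have hc : ⁅a, x⁆ ∈ lowerPSeries p F (m + n + 1) :=
        ih m (Subgroup.commutator_mem_commutator ha hx)
      have hcp : ⁅a, x⁆ ^ p ∈ N := by
        apply lps_le (show m + (n + 1) + 1 ≤ m + n + 1 + 1 by omega)
        exact lps_pow_mem hc
      have hcx : ⁅⁅a, x⁆, x⁆ ∈ N := by
        apply lps_le (show m + (n + 1) + 1 ≤ m + n + 1 + n + 1 by omega)
        exact ih (m + n + 1) (Subgroup.commutator_mem_commutator hc hx)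
      set π := QuotientGroup.mk' N
      have hker : ∀ y : F, π y = 1 ↔ y ∈ N := fun y => QuotientGroup.eq_one_iff y
      rw [← hker]
      have hcommQ : Commute ⁅π a, π x⁆ (π x) := by
        have h1 : π ⁅⁅a, x⁆, x⁆ = 1 := (hker _).mpr hcx
        rw [map_commutatorElement, map_commutatorElement] at h1
        exact commutatorElement_eq_one_iff_commute.mp h1
      rw [map_commutatorElement, map_pow, commutatorElement_pow_right_of_commute hcommQ,
        ← map_commutatorElement, ← map_pow]
      exact (hker _).mpr hcp
    · rw [Subgroup.commutator_le]
      intro y hy g _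
      show ⁅a, ⁅y, g⁆⁆ ∈ N
      exact hcomm3 (Subgroup.commutator_mem_commutator ha
        (Subgroup.commutator_mem_commutator hy (Subgroup.mem_top g)))

end LPS2

section Open
variable {p : ℕ} {F : Type*} [Group F] [TopologicalSpace F] [IsTopologicalGroup F]

lemma finite_closure_of_comm_pow {G : Type*} [Group G] {q : ℕ} (hq : 1 < q)
    (hcomm : ∀ a b : G, a * b = b * a) (hpow : ∀ a : G, a ^ q = 1)
    {S : Set G} (hS : S.Finite) : (Subgroup.closure S : Set G).Finite := by
  classical
  letI : CommGroup G := { ‹Group G› with mul_comm := hcomm }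
  have hq0 : 0 < q := by omega
  have hqmod : ∀ (a : G) (c : ℕ), a ^ (c % q) = a ^ c := by
    intro a c
    conv_rhs => rw [← Nat.div_add_mod c q]
    rw [pow_add, pow_mul, hpow, one_pow, one_mul]
  let f : (hS.toFinset → Fin q) → G := fun e => ∏ s : hS.toFinset, (s : G) ^ ((e s : ℕ))
  have hsub : (Subgroup.closure S : Set G) ⊆ Set.range f := by
    intro x hx
    induction hx using Subgroup.closure_induction with
    | mem x hxS =>
      have hx' : x ∈ hS.toFinset := hS.mem_toFinset.mpr hxS
      refine ⟨fun s => if s = ⟨x, hx'⟩ then ⟨1 % q, Nat.mod_lt _ hq0⟩ else ⟨0, hq0⟩, ?_⟩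
      show (∏ s : hS.toFinset, (s : G) ^
        (((if s = ⟨x, hx'⟩ then (⟨1 % q, Nat.mod_lt _ hq0⟩ : Fin q) else ⟨0, hq0⟩) : Fin q) : ℕ)) = x
      rw [Finset.prod_eq_single_of_mem (⟨x, hx'⟩ : hS.toFinset) (Finset.mem_univ _)]
      · simp [hqmod x 1]
      · intro b _ hb
        simp [hb]
    | one =>
      exact ⟨fun _ => ⟨0, hq0⟩, by simp [f]⟩
    | mul x y hx hy ihx ihy =>
      obtain ⟨e1, rfl⟩ := ihx
      obtain ⟨e2, rfl⟩ := ihy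
      refine ⟨fun s => ⟨((e1 s : ℕ) + (e2 s : ℕ)) % q, Nat.mod_lt _ hq0⟩, ?_⟩
      show (∏ s : hS.toFinset, (s : G) ^ (((e1 s : ℕ) + (e2 s : ℕ)) % q)) = f e1 * f e2
      rw [← Finset.prod_mul_distrib]
      exact Finset.prod_congr rfl fun s _ => by rw [hqmod, pow_add]
    | inv x hx ihx =>
      obtain ⟨e1, rfl⟩ := ihx
      refine ⟨fun s => ⟨(q - (e1 s : ℕ)) % q, Nat.mod_lt _ hq0⟩, ?_⟩
      show (∏ s : hS.toFinset, (s : G) ^ ((q - (e1 s : ℕ)) % q)) = (f e1)⁻¹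
      rw [← Finset.prod_inv_distrib]
      refine Finset.prod_congr rfl fun s _ => ?_
      rw [hqmod]
      apply eq_inv_of_mul_eq_one_left
      rw [← pow_add, Nat.sub_add_cancel (le_of_lt (e1 s).2), hpow]
  exact (Set.finite_range f).subset hsub

lemma lps_open_and_fg [CompactSpace F] (hp : 1 < p)
    {T0 : Set F} (hT0 : T0.Finite) (hgen : (Subgroup.closure T0).topologicalClosure = ⊤)
    (n : ℕ) :
    IsOpen ((lowerPSeries p F n : Subgroup F) : Set F) ∧
      ∃ Γ : Subgroup F, Γ.FG ∧ Γ.topologicalClosure = lowerPSeries p F n := by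
  induction n with
  | zero =>
    refine ⟨by rw [lps_zero]; simp, Subgroup.closure T0,
      (Subgroup.fg_iff _).mpr ⟨T0, rfl, hT0⟩, by rw [hgen, lps_zero]⟩
  | succ n ih =>
    obtain ⟨hopen, Γn, hfg, hdense⟩ := ih
    set Ln := lowerPSeries p F n with hLn
    set N := lowerPSeries p F (n + 1) with hNdef
    have hNle : N ≤ Ln := lps_succ_le n
    have hΓle : Γn ≤ Ln := hdense ▸ Subgroup.le_topologicalClosure Γn
    let q : Ln →* Ln ⧸ N.subgroupOf Ln := QuotientGroup.mk' (N.subgroupOf Ln)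
    have hqsurj : Function.Surjective q := QuotientGroup.mk'_surjective _
    have hmemN : ∀ (x : Ln), x ∈ N.subgroupOf Ln ↔ (x : F) ∈ N := fun x =>
      Subgroup.mem_subgroupOf
    have hcommQ : ∀ u v : Ln ⧸ N.subgroupOf Ln, u * v = v * u := by
      intro u v
      obtain ⟨a, rfl⟩ := hqsurj u
      obtain ⟨b, rfl⟩ := hqsurj v
      rw [← map_mul, ← map_mul]
      apply (QuotientGroup.mk'_eq_mk' _).mpr
      refine ⟨(a * b)⁻¹ * (b * a), ?_, by group⟩
      rw [hmemN]
      have hval : (((a * b)⁻¹ * (b * a) : Ln) : F) = ⁅(b : F)⁻¹, (a : F)⁻¹⁆ := by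
        push_cast
        simp only [commutatorElement_def]
        group
      rw [hval]
      exact lps_le (show n + 1 ≤ n + n + 1 by omega)
        (lps_comm n n (Subgroup.commutator_mem_commutator (inv_mem b.2) (inv_mem a.2)))
    have hpowQ : ∀ u : Ln ⧸ N.subgroupOf Ln, u ^ p = 1 := by
      intro u
      obtain ⟨a, rfl⟩ := hqsurj u
      rw [← map_pow]
      apply (QuotientGroup.eq_one_iff _).mpr
      rw [hmemN]
      rw [SubgroupClass.coe_pow]
      exact lps_pow_mem a.2
    obtain ⟨T, hTcl, hTfin⟩ := (Subgroup.fg_iff Γn).mp hfg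
    have hTQfin : ((fun x : Ln => q x) '' {x : Ln | (x : F) ∈ T}).Finite := by
      apply Set.Finite.image
      apply Set.Finite.preimage (Set.injOn_of_injective Subtype.val_injective) hTfin
    set KQ := Subgroup.closure ((fun x : Ln => q x) '' {x : Ln | (x : F) ∈ T}) with hKQ
    have hKQfin : (KQ : Set (Ln ⧸ N.subgroupOf Ln)).Finite :=
      finite_closure_of_comm_pow hp hcommQ hpowQ hTQfin
    set A : Set F := {x | ∃ hx : x ∈ Ln, q ⟨x, hx⟩ ∈ KQ} with hA
    have hA1 : (Γn : Set F) ⊆ A := by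
      intro x hxΓ
      have hxcl : x ∈ Subgroup.closure T := by rw [hTcl]; exact hxΓ
      refine Subgroup.closure_induction
        (p := fun y _ => ∃ hy : y ∈ Ln, q ⟨y, hy⟩ ∈ KQ) ?_ ?_ ?_ ?_ hxcl
      · intro y hyT
        have hyL : y ∈ Ln := hΓle (hTcl ▸ Subgroup.subset_closure hyT)
        exact ⟨hyL, Subgroup.subset_closure ⟨⟨y, hyL⟩, hyT, rfl⟩⟩
      · refine ⟨one_mem _, ?_⟩
        have h1 : (⟨(1 : F), one_mem Ln⟩ : Ln) = 1 := rfl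
        rw [h1, map_one]
        exact one_mem KQ
      · rintro y z hy hz ⟨hyL, hyK⟩ ⟨hzL, hzK⟩
        refine ⟨mul_mem hyL hzL, ?_⟩
        have h1 : (⟨y * z, mul_mem hyL hzL⟩ : Ln) = ⟨y, hyL⟩ * ⟨z, hzL⟩ := rfl
        rw [h1, map_mul]
        exact mul_mem hyK hzK
      · rintro y hy ⟨hyL, hyK⟩
        refine ⟨inv_mem hyL, ?_⟩
        have h1 : (⟨y⁻¹, inv_mem hyL⟩ : Ln) = (⟨y, hyL⟩ : Ln)⁻¹ := rfl
        rw [h1, map_inv]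
        exact inv_mem hyK
    have hAclosed : IsClosed A := by
      have hrw : A = ⋃ u ∈ (KQ : Set (Ln ⧸ N.subgroupOf Ln)),
          {x : F | ∃ hx : x ∈ Ln, q ⟨x, hx⟩ = u} := by
        ext x
        simp only [hA, Set.mem_setOf_eq, Set.mem_iUnion, SetLike.mem_coe]
        constructor
        · rintro ⟨hx, hk⟩; exact ⟨q ⟨x, hx⟩, hk, hx, rfl⟩
        · rintro ⟨u, hu, hx, rfl⟩; exact ⟨hx, hu⟩
      rw [hrw]
      apply Set.Finite.isClosed_biUnion hKQfin
      intro u _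
      obtain ⟨y, rfl⟩ := hqsurj u
      have hrw2 : {x : F | ∃ hx : x ∈ Ln, q ⟨x, hx⟩ = q y} =
          (Ln : Set F) ∩ ((fun x => x⁻¹ * (y : F)) ⁻¹' (N : Set F)) := by
        ext x
        simp only [Set.mem_setOf_eq, Set.mem_inter_iff, Set.mem_preimage, SetLike.mem_coe]
        constructor
        · rintro ⟨hx, hqq⟩
          refine ⟨hx, ?_⟩
          obtain ⟨z, hzN, hz⟩ := (QuotientGroup.mk'_eq_mk' _).mp hqq
          rw [hmemN] at hzN
          have hzval : (z : F) = x⁻¹ * (y : F) := by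
            have := congrArg (Subtype.val) hz
            push_cast at this
            rw [← this]
            group
          rwa [hzval] at hzN
        · rintro ⟨hx, hN2⟩
          refine ⟨hx, (QuotientGroup.mk'_eq_mk' _).mpr ⟨(⟨x, hx⟩ : Ln)⁻¹ * y, ?_, by group⟩⟩
          rw [hmemN]
          push_cast
          exact hN2
      rw [hrw2]
      exact IsClosed.inter (lps_isClosed n)
        (IsClosed.preimage (by fun_prop) (lps_isClosed (n + 1)))
    have hLnA : (Ln : Set F) ⊆ A := by
      have h1 : closure (Γn : Set F) ⊆ A := closure_minimal hA1 hAclosed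
      have h2 : closure (Γn : Set F) = (Ln : Set F) := by
        rw [← Subgroup.topologicalClosure_coe, hdense]
      rwa [h2] at h1
    have hfinQ : Finite (Ln ⧸ N.subgroupOf Ln) := by
      rw [← Set.finite_univ_iff]
      apply hKQfin.subset
      intro u _
      obtain ⟨a, rfl⟩ := hqsurj u
      obtain ⟨hx, hk⟩ := hLnA a.2
      have h1 : (⟨(a : F), hx⟩ : Ln) = a := Subtype.ext rfl
      rwa [h1] at hk
    have hrel : N.relIndex Ln ≠ 0 := by
      have h1 : N.relIndex Ln = Nat.card (Ln ⧸ N.subgroupOf Ln) := rfl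
      rw [h1]
      exact Nat.card_ne_zero.mpr ⟨⟨1⟩, hfinQ⟩
    haveI : Finite (F ⧸ Ln) := Subgroup.quotient_finite_of_isOpen Ln hopen
    have hidxLn : Ln.index ≠ 0 := Subgroup.index_ne_zero_of_finite
    have hidxN : N.index ≠ 0 := by
      rw [← Subgroup.relIndex_mul_index hNle]
      exact Nat.mul_ne_zero hrel hidxLn
    haveI : N.FiniteIndex := ⟨hidxN⟩
    have hopenN : IsOpen (N : Set F) :=
      Subgroup.isOpen_of_isClosed_of_finiteIndex N (lps_isClosed _)
    refine ⟨hopenN, Γn ⊓ N, ?_, ?_⟩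
    · -- FG
      haveI : Group.FG Γn := (Group.fg_iff_subgroup_fg Γn).mpr hfg
      haveI : (N.subgroupOf Γn).FiniteIndex := Subgroup.instFiniteIndex_subgroupOf N Γn
      haveI : Group.FG (N.subgroupOf Γn) := Subgroup.fg_of_index_ne_zero _
      have hfgsub : (N.subgroupOf Γn).FG := (Group.fg_iff_subgroup_fg _).mp inferInstance
      -- wrong: fg_iff_subgroup_fg relates Group.FG ↥H and H.FG for H : Subgroup G; here
      -- N.subgroupOf Γn : Subgroup ↥Γn, fine.
      obtain ⟨St, hStcl, hStfin⟩ := (Subgroup.fg_iff _).mp hfgsub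
      have hmap : (N.subgroupOf Γn).map Γn.subtype = N ⊓ Γn := Subgroup.subgroupOf_map_subtype N Γn
      rw [inf_comm, ← hmap, ← hStcl, MonoidHom.map_closure]
      exact (Subgroup.fg_iff _).mpr ⟨_, rfl, hStfin.image _⟩
    · -- density
      apply le_antisymm
      · exact Subgroup.topologicalClosure_minimal _ inf_le_right (lps_isClosed _)
      · intro x hxN
        have hx : x ∈ closure ((Γn ⊓ N : Subgroup F) : Set F) := by
          rw [mem_closure_iff]
          intro o ho hxo
          have hxLn : x ∈ closure (Γn : Set F) := by
            rw [← Subgroup.topologicalClosure_coe, hdense]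
            exact hNle hxN
          rw [mem_closure_iff] at hxLn
          obtain ⟨y, ⟨hyo, hyN⟩, hyΓ⟩ := hxLn (o ∩ (N : Set F)) (ho.inter hopenN) ⟨hxo, hxN⟩
          exact ⟨y, hyo, hyΓ, hyN⟩
        rw [← Subgroup.topologicalClosure_coe] at hx
        exact hx

end Open

section Telescope
variable {G : Type*} [Group G]

lemma relindex_telescope (S : ℕ → Subgroup G) (hle : ∀ i, S (i + 1) ≤ S i)
    (h0 : S 0 = ⊤) (D : Subgroup G) (n : ℕ) :
    (S n).relIndex D = ∏ m ∈ Finset.range n, (S (m + 1)).relIndex (D ⊓ S m) := by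
  induction n with
  | zero => rw [h0, Finset.range_zero, Finset.prod_empty, Subgroup.relIndex_top_left]
  | succ n ih =>
    rw [Finset.prod_range_succ, ← ih]
    have h1 : D ⊓ S (n + 1) ≤ D ⊓ S n := inf_le_inf_left _ (hle n)
    have h2 : D ⊓ S n ≤ D := inf_le_left
    have key := Subgroup.relIndex_mul_relIndex (D ⊓ S (n + 1)) (D ⊓ S n) D h1 h2
    have e1 : (D ⊓ S (n + 1)).relIndex D = (S (n + 1)).relIndex D := by
      rw [inf_comm, Subgroup.inf_relIndex_right]
    have e2 : (D ⊓ S n).relIndex D = (S n).relIndex D := by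
      rw [inf_comm, Subgroup.inf_relIndex_right]
    have e3 : (D ⊓ S (n + 1)).relIndex (D ⊓ S n) = (S (n + 1)).relIndex (D ⊓ S n) := by
      have : D ⊓ S (n + 1) = S (n + 1) ⊓ (D ⊓ S n) := by
        rw [inf_comm (a := D) (b := S (n + 1)), ← inf_assoc,
          inf_of_le_left (le_trans inf_le_left (hle n) : S (n + 1) ⊓ D ≤ S n)]
      rw [this, Subgroup.inf_relIndex_right]
    rw [← e1, ← key, e2, e3, mul_comm]

end Telescope
/-- Let `Γ` be the free discrete group on `d ≥ 2` generators, `F` its pro-`p` completion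
(a free pro-`p` group on the images `ι i` of the generators, via `j = FreeGroup.lift ι`),
and let `Λ = ⊕_n P_n(F)/P_{n+1}(F)` be the graded `F_p`-Lie algebra associated to the lower
`p`-series. For a subgroup `Δ ≤ Γ` with image `D = j(Δ)`, the graded object
`gr(Δ) = ⊕_n (Δ ∩ P_n)P_{n+1}/P_{n+1}` is a graded Lie subalgebra of `Λ` closed under the
`p`-power operators — group-theoretically: commutators and `p`-th powers of elements of
`D ∩ P_m` land in the corresponding components `(D ∩ P_{m'})P_{m'+1}` — and the topological
closure of `D` in `F` satisfies
`hdim_F^L(D̄) = dens_Λ(gr Δ) = liminf_n (Σ_{m<n} dim gr(Δ)_m)/(Σ_{m<n} dim Λ_m)`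
(dimensions expressed as logarithms of indices; `lowerPSeries p F m = P_{m+1}(F)`). -/
theorem gr_subalgebra_and_hdim_eq_density
    (p d : ℕ) (hp : p.Prime) (hd : 2 ≤ d)
    (F : Type) [Group F] [TopologicalSpace F] [IsTopologicalGroup F]
    (ι : Fin d → F) (hF : IsFreeProPGroupOn p ι)
    (Δ : Subgroup (FreeGroup (Fin d))) :
    (∀ m n : ℕ, ∀ a ∈ Δ.map (FreeGroup.lift ι) ⊓ lowerPSeries p F m,
      ∀ b ∈ Δ.map (FreeGroup.lift ι) ⊓ lowerPSeries p F n,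
        ⁅a, b⁆ ∈ (Δ.map (FreeGroup.lift ι) ⊓ lowerPSeries p F (m + n + 1)) ⊔
          lowerPSeries p F (m + n + 2)) ∧
    (∀ m : ℕ, ∀ a ∈ Δ.map (FreeGroup.lift ι) ⊓ lowerPSeries p F m,
        a ^ p ∈ (Δ.map (FreeGroup.lift ι) ⊓ lowerPSeries p F (m + 1)) ⊔
          lowerPSeries p F (m + 2)) ∧
    hDim (lowerPSeries p F) (Δ.map (FreeGroup.lift ι)).topologicalClosure =
      Filter.liminf
        (fun n : ℕ =>
          (∑ m ∈ Finset.range n,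
            Real.log (Subgroup.relIndex (lowerPSeries p F (m + 1))
              (Δ.map (FreeGroup.lift ι) ⊓ lowerPSeries p F m) : ℝ)) /
          (∑ m ∈ Finset.range n,
            Real.log (Subgroup.relIndex (lowerPSeries p F (m + 1))
              (lowerPSeries p F m) : ℝ)))
        Filter.atTop := by
  obtain ⟨⟨hcompact, _, _, _⟩, hgen, _⟩ := hF
  haveI : CompactSpace F := hcompact
  have hp1 : 1 < p := hp.one_lt
  set D := Δ.map (FreeGroup.lift ι) with hDdef
  have hcommD : ∀ a ∈ D, ∀ b ∈ D, ⁅a, b⁆ ∈ D := fun a ha b hb =>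
    commutatorElement_def a b ▸ mul_mem (mul_mem (mul_mem ha hb) (inv_mem ha)) (inv_mem hb)
  refine ⟨?_, ?_, ?_⟩
  · intro m n a ha b hb
    apply Subgroup.mem_sup_left
    obtain ⟨haD, haL⟩ := Subgroup.mem_inf.mp ha
    obtain ⟨hbD, hbL⟩ := Subgroup.mem_inf.mp hb
    exact Subgroup.mem_inf.mpr ⟨hcommD a haD b hbD,
      lps_comm n m (Subgroup.commutator_mem_commutator haL hbL)⟩
  · intro m a ha
    apply Subgroup.mem_sup_left
    obtain ⟨haD, haL⟩ := Subgroup.mem_inf.mp ha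
    exact Subgroup.mem_inf.mpr ⟨pow_mem haD p, lps_pow_mem haL⟩
  · have hopen : ∀ n, IsOpen ((lowerPSeries p F n : Subgroup F) : Set F) := fun n =>
      (lps_open_and_fg hp1 (Set.finite_range ι) hgen n).1
    have hFI : ∀ n, (lowerPSeries p F n).FiniteIndex := fun n => by
      haveI := Subgroup.quotient_finite_of_isOpen _ (hopen n)
      exact ⟨Subgroup.index_ne_zero_of_finite⟩
    have hrelne : ∀ (K : Subgroup F) (n : ℕ), (lowerPSeries p F (n + 1)).relIndex K ≠ 0 := by
      intro K n
      haveI := hFI (n + 1)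
      exact (Subgroup.instFiniteIndex_subgroupOf (lowerPSeries p F (n + 1)) K).index_ne_zero
    have hDrel : ∀ n, (lowerPSeries p F n).relIndex D.topologicalClosure
        = (lowerPSeries p F n).relIndex D := by
      intro n
      have hsup : D.topologicalClosure ⊔ lowerPSeries p F n = D ⊔ lowerPSeries p F n := by
        apply le_antisymm
        · refine sup_le ?_ le_sup_right
          apply Subgroup.topologicalClosure_minimal _ le_sup_left
          exact Subgroup.isClosed_of_isOpen _ (Subgroup.isOpen_mono le_sup_right (hopen n))
        · exact sup_le (le_trans (Subgroup.le_topologicalClosure D) le_sup_left) le_sup_right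
      calc (lowerPSeries p F n).relIndex D.topologicalClosure
          = (lowerPSeries p F n).relIndex (D.topologicalClosure ⊔ lowerPSeries p F n) :=
            (Subgroup.relIndex_sup_right _ _).symm
        _ = (lowerPSeries p F n).relIndex (D ⊔ lowerPSeries p F n) := by rw [hsup]
        _ = (lowerPSeries p F n).relIndex D := Subgroup.relIndex_sup_right _ _
    unfold hDim
    congr 1
    funext i
    congr 1
    · rw [hDrel i, relindex_telescope (lowerPSeries p F) lps_succ_le lps_zero D i,
        Nat.cast_prod, Real.log_prod]
      intro m _
      exact Nat.cast_ne_zero.mpr (hrelne _ m)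
    · rw [← Subgroup.relIndex_top_right,
        relindex_telescope (lowerPSeries p F) lps_succ_le lps_zero ⊤ i]
      simp only [top_inf_eq]
      rw [Nat.cast_prod, Real.log_prod]
      intro m _
      exact Nat.cast_ne_zero.mpr (hrelne _ m)
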